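/- Let p ≡ 1 or 7 (mod 8) be prime, and let 𝔭 = (a_p + b_p√2) be a prime ideal of ℤ[√2] above p, where (a_p, b_p) is the minimal positive solution of a² - 2b² = p. Then the minimum of γ² + τ(γ)² over nonzero γ ∈ 𝔭 equals 2·min(2a_p² - p, 2a_{-p}² + p), where a_{-p} = a_p - 2b_p. -/
import Mathlib

/-- The real embedding of `ℤ√2` sending `√2` to `Real.sqrt 2`. -/
noncomputable def Zsqrtd.toReal2 (z : Zsqrtd 2) : ℝ := z.re + z.im * Real.sqrt 2

/-- The conjugate real embedding of `ℤ√2` sending `√2` to `-Real.sqrt 2`. -/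
noncomputable def Zsqrtd.toReal2' (z : Zsqrtd 2) : ℝ := z.re - z.im * Real.sqrt 2

/-- The squared length of `z ∈ ℤ√2` under the canonical embedding `z ↦ (z, τ z)`. -/
noncomputable def Zsqrtd.lenSq2 (z : Zsqrtd 2) : ℝ :=
  Zsqrtd.toReal2 z ^ 2 + Zsqrtd.toReal2' z ^ 2

/-- Core integer lower bound for the quadratic form. -/
lemma Qlb (a b u v : ℤ) (hb : 0 < b) (hba : 2*b ≤ a) (huv : ¬(u = 0 ∧ v = 0)) :
    min (a^2+2*b^2) (3*a^2-8*a*b+6*b^2) ≤ (a*u+2*b*v)^2 + 2*(a*v+b*u)^2 := by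
  have ha : 0 < a := by linarith
  have hA : 0 < a^2+2*b^2 := by positivity
  have hC : 0 < 3*a^2-8*a*b+6*b^2 := by nlinarith [sq_nonneg (a-2*b), sq_nonneg (a-b), hb, hba]
  rcases eq_or_ne v 0 with hv | hv
  · subst hv
    have hu : u ≠ 0 := by tauto
    have hu2 : 1 ≤ u^2 := by
      rcases (show 1 ≤ u ∨ u ≤ -1 by omega) with h | h
      · nlinarith
      · nlinarith
    refine le_trans (min_le_left _ _) ?_
    nlinarith [hu2, hA]
  · -- v ≠ 0 : cases on |v|
    have key1 : ∀ w : ℤ,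
        min (a^2+2*b^2) (3*a^2-8*a*b+6*b^2) ≤ (a*w+2*b)^2 + 2*(a+b*w)^2 := by
      intro w
      rcases le_or_gt (4*a*b) (a^2+2*b^2) with hc | hc
      · refine le_trans (min_le_left _ _) ?_
        nlinarith [sq_nonneg (2*(a^2+2*b^2)*w + 8*a*b), hA,
          mul_nonneg (show (0:ℤ) ≤ a^2+2*b^2-4*a*b by linarith)
            (show (0:ℤ) ≤ a^2+2*b^2+4*a*b by positivity)]
      · refine le_trans (min_le_right _ _) ?_
        rcases le_or_gt (-1) w with hw | hw
        · nlinarith [mul_nonneg (show (0:ℤ) ≤ w+1 by omega)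
            (show (0:ℤ) ≤ (a^2+2*b^2)*w + 8*a*b - (a^2+2*b^2) by
              nlinarith [mul_nonneg (show (0:ℤ) ≤ w+1 by omega) hA.le])]
        · have hw2 : w ≤ -2 := by omega
          nlinarith [mul_nonneg (show (0:ℤ) ≤ -(w+1) by omega)
            (show (0:ℤ) ≤ (a^2+2*b^2) - 8*a*b - (a^2+2*b^2)*w by
              nlinarith [mul_nonneg (show (0:ℤ) ≤ -w-2 by omega) hA.le, hC])]
    rcases (show v = 1 ∨ v = -1 ∨ 2 ≤ v ∨ v ≤ -2 by omega) with h | h | h | h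
    · subst h; linarith [key1 u]
    · subst h; linarith [key1 (-u)]
    all_goals {
      have hv4 : 4 ≤ v^2 := by nlinarith
      refine le_trans (min_le_right _ _) ?_
      have hs : 0 ≤ a - 2*b := by omega
      have h8 : (a^2+2*b^2)*(3*a^2-8*a*b+6*b^2) ≤ 8*(a^2-2*b^2)^2 := by
        nlinarith [mul_nonneg (mul_nonneg (mul_nonneg hs hs) hs) hs,
          mul_nonneg (mul_nonneg (mul_nonneg hs hs) hs) hb.le,
          mul_nonneg (mul_nonneg (mul_nonneg hs hs) hb.le) hb.le,
          mul_nonneg (mul_nonneg (mul_nonneg hs hb.le) hb.le) hb.le,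
          mul_nonneg (mul_nonneg (mul_nonneg hb.le hb.le) hb.le) hb.le]
      have hAQ : 8*(a^2-2*b^2)^2 ≤ (a^2+2*b^2) * ((a*u+2*b*v)^2 + 2*(a*v+b*u)^2) := by
        nlinarith [sq_nonneg ((a^2+2*b^2)*u + 4*a*b*v), sq_nonneg (a^2-2*b^2),
          mul_nonneg (sq_nonneg (a^2-2*b^2)) (show (0:ℤ) ≤ v^2 - 4 by linarith)]
      exact le_of_mul_le_mul_left (le_trans h8 hAQ) hA }

lemma lenSq2_eq (z : Zsqrtd 2) :
    Zsqrtd.lenSq2 z = ((2*(z.re^2 + 2*z.im^2) : ℤ) : ℝ) := by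
  have h2 : Real.sqrt 2 ^ 2 = 2 := Real.sq_sqrt (by norm_num)
  unfold Zsqrtd.lenSq2 Zsqrtd.toReal2 Zsqrtd.toReal2'
  push_cast
  nlinarith [h2]

theorem shortest_vector_prime_ideal_Zsqrt2
    (p : ℕ) (hp : p.Prime) (hp18 : p % 8 = 1 ∨ p % 8 = 7)
    (a b : ℤ) (ha : 0 < a) (hb : 0 < b) (hab : a ^ 2 - 2 * b ^ 2 = (p : ℤ))
    (hmin : ∀ a' b' : ℤ, 0 < a' → 0 < b' → a' ^ 2 - 2 * b' ^ 2 = (p : ℤ) → a ≤ a') :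
    IsLeast
      {r : ℝ | ∃ γ : Zsqrtd 2, γ ≠ 0 ∧
        γ ∈ Ideal.span ({(⟨a, b⟩ : Zsqrtd 2)} : Set (Zsqrtd 2)) ∧ r = Zsqrtd.lenSq2 γ}
      (2 * min (2 * (a : ℝ) ^ 2 - p) (2 * ((a : ℝ) - 2 * b) ^ 2 + p)) := by
  have hppos : (0:ℤ) < (p:ℤ) := by exact_mod_cast hp.pos
  have hab2 : 2*b^2 < a^2 := by linarith
  have h34 : 0 < 3*a - 4*b := by nlinarith
  -- minimality gives a ≥ 2b
  have hba : 2*b ≤ a := by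
    rcases lt_trichotomy (2*a) (3*b) with h | h | h
    · have h1 := hmin (3*a-4*b) (3*b-2*a) h34 (by omega) (by ring_nf; ring_nf at hab; linarith)
      omega
    · exfalso
      have hbe : b^2 = 4*(p:ℤ) := by nlinarith
      obtain ⟨c, hc⟩ : ∃ c, b = 2*c := by
        rcases Int.even_or_odd b with ⟨c, hc⟩ | ⟨c, hc⟩
        · exact ⟨c, by omega⟩
        · exfalso; omega
      have hcp : c^2 = (p:ℤ) := by nlinarith
      have hcnat : (c.natAbs)^2 = p := by
        have := congrArg Int.natAbs hcp
        simpa [Int.natAbs_pow] using this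
      have hdvd : c.natAbs ∣ p := ⟨c.natAbs, by rw [← hcnat]; ring⟩
      have h2p := hp.two_le
      rcases (Nat.Prime.eq_one_or_self_of_dvd hp _ hdvd) with h1 | h1
      · rw [h1] at hcnat; simp at hcnat; omega
      · rw [h1] at hcnat; nlinarith
    · have h1 := hmin (3*a-4*b) (2*a-3*b) h34 (by omega) (by ring_nf; ring_nf at hab; linarith)
      omega
  have hpr : ((p:ℤ):ℝ) = (a:ℝ)^2 - 2*(b:ℝ)^2 := by exact_mod_cast congrArg (Int.cast : ℤ → ℝ) hab.symm
  have hminre : 2 * min (2 * (a : ℝ) ^ 2 - p) (2 * ((a : ℝ) - 2 * b) ^ 2 + p)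
      = ((2 * min (a^2+2*b^2) (3*a^2-8*a*b+6*b^2) : ℤ) : ℝ) := by
    push_cast
    rw [show (2*(a:ℝ)^2 - (p:ℕ)) = (a:ℝ)^2+2*(b:ℝ)^2 by
        rw [show ((p:ℕ):ℝ) = ((p:ℤ):ℝ) by push_cast; ring, hpr]; ring,
      show (2*((a:ℝ)-2*(b:ℝ))^2 + (p:ℕ)) = 3*(a:ℝ)^2-8*(a:ℝ)*(b:ℝ)+6*(b:ℝ)^2 by
        rw [show ((p:ℕ):ℝ) = ((p:ℤ):ℝ) by push_cast; ring, hpr]; ring]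
  constructor
  · -- membership
    rcases le_total ((a:ℤ)^2+2*b^2) (3*a^2-8*a*b+6*b^2) with hc | hc
    · refine ⟨(⟨a, b⟩ : Zsqrtd 2), ?_, Ideal.mem_span_singleton.2 dvd_rfl, ?_⟩
      · simp [Zsqrtd.ext_iff]; omega
      · rw [hminre, lenSq2_eq]
        norm_cast
        simp only [min_eq_left hc]
    · refine ⟨(⟨2*b-a, a-b⟩ : Zsqrtd 2), ?_, Ideal.mem_span_singleton.2 ⟨⟨-1, 1⟩, by
          simp [Zsqrtd.ext_iff, Zsqrtd.re_mul, Zsqrtd.im_mul]; constructor <;> ring⟩, ?_⟩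
      · simp [Zsqrtd.ext_iff]; omega
      · rw [hminre, lenSq2_eq]
        norm_cast
        simp only [min_eq_right hc]
        ring
  · -- lower bound
    rintro r ⟨γ, hγ0, hγmem, rfl⟩
    obtain ⟨β, hβ⟩ := Ideal.mem_span_singleton.1 hγmem
    have hβ0 : ¬(β.re = 0 ∧ β.im = 0) := by
      rintro ⟨h1, h2⟩
      apply hγ0
      have : β = 0 := by simp [Zsqrtd.ext_iff, h1, h2]
      rw [hβ, this, mul_zero]
    have hQ := Qlb a b β.re β.im hb hba hβ0
    rw [hminre, lenSq2_eq]
    have h : 2 * min ((a:ℤ)^2+2*b^2) (3*a^2-8*a*b+6*b^2) ≤ 2*(γ.re^2 + 2*γ.im^2) := by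
      rw [hβ]
      simp only [Zsqrtd.re_mul, Zsqrtd.im_mul]
      nlinarith [hQ]
    exact_mod_cast h
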